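/- The class 𝔖 contains the power series x and x/(1−x^m) for every m ≥ 1, and 𝔖 is closed under multiplication by positive integers, under addition, and under Cauchy product: if P(x), Q(x) ∈ 𝔖 and k is a positive integer then k·P(x), P(x)+Q(x), and P(x)·Q(x) are in 𝔖. -/

import Mathlib

open Filter Finset

noncomputable section

/-- `R ∈ RT1`: coefficients eventually positive and `r(n-1)/r(n) → 1`. -/
def RT1 (r : ℕ → ℝ) : Prop :=
  (∀ᶠ n in Filter.atTop, 0 < r n) ∧
    Filter.Tendsto (fun n => r (n - 1) / r n) Filter.atTop (nhds 1)

/-- The coefficients are all natural numbers. -/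
def IsNatSeries (r : ℕ → ℝ) : Prop := ∀ n, ∃ k : ℕ, r n = (k : ℝ)

/-- Members of `RT1` with natural-number coefficients. -/
def RTN1 (r : ℕ → ℝ) : Prop := RT1 r ∧ IsNatSeries r

/-- Coefficient sequence of `R(x^d)`. -/
def substPow (d : ℕ) (r : ℕ → ℝ) : ℕ → ℝ := fun n => if d ∣ n then r (n / d) else 0

/-- Cauchy product of coefficient sequences. -/
def cauchy (a b : ℕ → ℝ) : ℕ → ℝ := fun n => ∑ j ∈ Finset.range (n + 1), a j * b (n - j)

/-- A polynomial with natural-number coefficients (as a coefficient sequence). -/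
def IsNatPoly (p : ℕ → ℝ) : Prop := IsNatSeries p ∧ ∃ N, ∀ n, N ≤ n → p n = 0

/-- Coefficient sequence of `x^c · A(x)`. -/
def xPowMul (c : ℕ) (a : ℕ → ℝ) : ℕ → ℝ := fun n => if c ≤ n then a (n - c) else 0

/-- `𝔔`: nonzero power series of the form `x^c · R(x^d)` with `0 ≤ c < d`, `R ∈ RTN1`. -/
def InQ (q : ℕ → ℝ) : Prop :=
  q ≠ 0 ∧ ∃ (c d : ℕ) (r : ℕ → ℝ), c < d ∧ RTN1 r ∧ q = xPowMul c (substPow d r)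

/-- `𝔖`: nonzero power series with natural-number coefficients and zero constant term
expressible as `p₀(x) + ∑_{i=1}^k p_i(x) · R_i(x^{d_i})` with the `p_i ∈ ℕ[x]`,
`R_i ∈ RTN1` and `d_i ≥ 1`. -/
def InS (a : ℕ → ℝ) : Prop :=
  a ≠ 0 ∧ a 0 = 0 ∧ IsNatSeries a ∧
    ∃ (k : ℕ) (p : ℕ → (ℕ → ℝ)) (R : ℕ → (ℕ → ℝ)) (d : ℕ → ℕ),
      IsNatPoly (p 0) ∧
      (∀ i ∈ Finset.Icc 1 k, IsNatPoly (p i) ∧ RTN1 (R i) ∧ 1 ≤ d i) ∧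
      ∀ n, a n = p 0 n + ∑ i ∈ Finset.Icc 1 k, cauchy (p i) (substPow (d i) (R i)) n

-- ### basics on nat series

lemma natSeries_nonneg {a : ℕ → ℝ} (h : IsNatSeries a) (n : ℕ) : 0 ≤ a n := by
  obtain ⟨k, hk⟩ := h n; rw [hk]; positivity

lemma natSeries_pos_ge_one {a : ℕ → ℝ} (h : IsNatSeries a) {n : ℕ} (hp : 0 < a n) :
    1 ≤ a n := by
  obtain ⟨k, hk⟩ := h n
  rw [hk] at hp ⊢
  exact_mod_cast Nat.cast_pos.mp hp

lemma natSeries_add {a b : ℕ → ℝ} (ha : IsNatSeries a) (hb : IsNatSeries b) :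
    IsNatSeries (fun n => a n + b n) := by
  intro n
  obtain ⟨j, hj⟩ := ha n; obtain ⟨k, hk⟩ := hb n
  exact ⟨j + k, by push_cast [hj, hk]; ring⟩

lemma natSeries_zero : IsNatSeries (fun _ => (0 : ℝ)) := fun _ => ⟨0, by simp⟩

lemma natSeries_cauchy {a b : ℕ → ℝ} (ha : IsNatSeries a) (hb : IsNatSeries b) :
    IsNatSeries (cauchy a b) := by
  intro n
  choose f hf using ha
  choose g hg using hb
  refine ⟨∑ j ∈ Finset.range (n + 1), f j * g (n - j), ?_⟩
  unfold cauchy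
  push_cast
  exact Finset.sum_congr rfl fun j _ => by rw [hf, hg]

lemma natSeries_sum {s : Finset ℕ} {F : ℕ → ℕ → ℝ} (h : ∀ i ∈ s, IsNatSeries (F i)) :
    IsNatSeries (fun n => ∑ i ∈ s, F i n) := by
  classical
  induction s using Finset.cons_induction with
  | empty => simpa using natSeries_zero
  | cons i s his ih =>
      simp only [Finset.sum_cons]
      exact natSeries_add (h i (Finset.mem_cons_self i s))
        (ih fun j hj => h j (Finset.mem_cons_of_mem hj))

lemma natSeries_substPow {r : ℕ → ℝ} (h : IsNatSeries r) (d : ℕ) :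
    IsNatSeries (substPow d r) := by
  intro n
  unfold substPow
  split_ifs with hd
  · exact h _
  · exact ⟨0, by simp⟩

lemma natSeries_nsmul {a : ℕ → ℝ} (h : IsNatSeries a) (k : ℕ) :
    IsNatSeries (fun n => (k : ℝ) * a n) := by
  intro n
  obtain ⟨j, hj⟩ := h n
  exact ⟨k * j, by push_cast [hj]; ring⟩

-- ### nat polys

lemma natPoly_zero : IsNatPoly (fun _ => (0 : ℝ)) := ⟨natSeries_zero, 0, fun _ _ => rfl⟩

def delta (c : ℕ) : ℕ → ℝ := fun n => if n = c then 1 else 0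

lemma natPoly_delta (c : ℕ) : IsNatPoly (delta c) := by
  constructor
  · intro n; unfold delta; split_ifs
    · exact ⟨1, by simp⟩
    · exact ⟨0, by simp⟩
  · exact ⟨c + 1, fun n hn => by unfold delta; rw [if_neg (by omega)]⟩

lemma natPoly_add {a b : ℕ → ℝ} (ha : IsNatPoly a) (hb : IsNatPoly b) :
    IsNatPoly (fun n => a n + b n) := by
  obtain ⟨haN, Na, hNa⟩ := ha
  obtain ⟨hbN, Nb, hNb⟩ := hb
  refine ⟨natSeries_add haN hbN, Na + Nb, fun n hn => ?_⟩
  show a n + b n = 0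
  rw [hNa n (by omega), hNb n (by omega), add_zero]

lemma natPoly_cauchy {a b : ℕ → ℝ} (ha : IsNatPoly a) (hb : IsNatPoly b) :
    IsNatPoly (cauchy a b) := by
  obtain ⟨haN, Na, hNa⟩ := ha
  obtain ⟨hbN, Nb, hNb⟩ := hb
  refine ⟨natSeries_cauchy haN hbN, Na + Nb, fun n hn => ?_⟩
  unfold cauchy
  apply Finset.sum_eq_zero
  intro j hj
  simp only [Finset.mem_range] at hj
  rcases le_or_gt Na j with h | h
  · rw [hNa j h, zero_mul]
  · rw [hNb (n - j) (by omega), mul_zero]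

lemma natPoly_nsmul {a : ℕ → ℝ} (h : IsNatPoly a) (k : ℕ) :
    IsNatPoly (fun n => (k : ℝ) * a n) := by
  obtain ⟨hN, N, hNa⟩ := h
  exact ⟨natSeries_nsmul hN k, N, fun n hn => by show (k:ℝ) * a n = 0; rw [hNa n hn, mul_zero]⟩

-- ### PowerSeries bridge

open PowerSeries

lemma mk_cauchy (a b : ℕ → ℝ) : PowerSeries.mk (cauchy a b) = PowerSeries.mk a * PowerSeries.mk b := by
  ext n
  rw [PowerSeries.coeff_mk, PowerSeries.coeff_mul]
  rw [Finset.Nat.sum_antidiagonal_eq_sum_range_succ (f := fun i j => (PowerSeries.coeff i (mk a)) * (PowerSeries.coeff j (mk b)))]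
  unfold cauchy
  simp [PowerSeries.coeff_mk]

lemma funeq_of_mk_eq {a b : ℕ → ℝ} (h : PowerSeries.mk a = PowerSeries.mk b) (n : ℕ) :
    a n = b n := by
  rw [← PowerSeries.coeff_mk n a, h, PowerSeries.coeff_mk]

lemma cauchy_comm (a b : ℕ → ℝ) (n : ℕ) : cauchy a b n = cauchy b a n :=
  funeq_of_mk_eq (by rw [mk_cauchy, mk_cauchy, mul_comm]) n

lemma cauchy_assoc (a b c : ℕ → ℝ) (n : ℕ) :
    cauchy (cauchy a b) c n = cauchy a (cauchy b c) n :=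
  funeq_of_mk_eq (by rw [mk_cauchy, mk_cauchy, mk_cauchy, mk_cauchy, mul_assoc]) n

lemma mk_delta (c : ℕ) : PowerSeries.mk (delta c) = (PowerSeries.X : ℝ⟦X⟧) ^ c := by
  ext n
  rw [PowerSeries.coeff_mk, PowerSeries.coeff_X_pow]
  rfl

lemma mk_xPowMul (c : ℕ) (a : ℕ → ℝ) :
    PowerSeries.mk (xPowMul c a) = (PowerSeries.X : ℝ⟦X⟧) ^ c * PowerSeries.mk a := by
  ext n
  rw [PowerSeries.coeff_mk, PowerSeries.coeff_X_pow_mul']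
  unfold xPowMul
  simp [PowerSeries.coeff_mk]

lemma cauchy_delta (c : ℕ) (a : ℕ → ℝ) (n : ℕ) : cauchy (delta c) a n = xPowMul c a n :=
  funeq_of_mk_eq (by rw [mk_cauchy, mk_delta, mk_xPowMul]) n

-- bilinearity
lemma cauchy_add_left (a b c : ℕ → ℝ) (n : ℕ) :
    cauchy (fun m => a m + b m) c n = cauchy a c n + cauchy b c n := by
  unfold cauchy
  rw [← Finset.sum_add_distrib]
  exact Finset.sum_congr rfl fun j _ => by ring

lemma cauchy_sum_left {ι : Type*} (s : Finset ι) (F : ι → ℕ → ℝ) (c : ℕ → ℝ) (n : ℕ) :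
    cauchy (fun m => ∑ i ∈ s, F i m) c n = ∑ i ∈ s, cauchy (F i) c n := by
  unfold cauchy
  rw [Finset.sum_comm]
  exact Finset.sum_congr rfl fun j _ => by rw [Finset.sum_mul]

lemma cauchy_zero_left (c : ℕ → ℝ) (n : ℕ) : cauchy (fun _ => (0:ℝ)) c n = 0 := by
  unfold cauchy; simp

lemma cauchy_nsmul_left (k : ℕ) (a c : ℕ → ℝ) (n : ℕ) :
    cauchy (fun m => (k:ℝ) * a m) c n = (k:ℝ) * cauchy a c n := by
  unfold cauchy
  rw [Finset.mul_sum]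
  exact Finset.sum_congr rfl fun j _ => by ring

-- ### substPow identities

/-- arithmetic-progression subsequence -/
def apSub (e α : ℕ) (r : ℕ → ℝ) : ℕ → ℝ := fun n => r (e * n + α)

lemma substPow_cauchy_substPow (D : ℕ) (hD : 1 ≤ D) (a b : ℕ → ℝ) (n : ℕ) :
    cauchy (substPow D a) (substPow D b) n = substPow D (cauchy a b) n := by
  unfold cauchy substPow
  by_cases hn : D ∣ n
  · obtain ⟨m, rfl⟩ := hn
    rw [if_pos (Dvd.intro m rfl), Nat.mul_div_cancel_left m (by omega)]
    have hstepA : ∑ j ∈ Finset.range (D * m + 1),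
        (if D ∣ j then a (j / D) else 0) * (if D ∣ D * m - j then b ((D * m - j) / D) else 0)
        = ∑ j ∈ (Finset.range (m + 1)).image (fun t => D * t),
        (if D ∣ j then a (j / D) else 0) * (if D ∣ D * m - j then b ((D * m - j) / D) else 0) := by
      symm
      apply Finset.sum_subset
      · intro j hj
        simp only [Finset.mem_image, Finset.mem_range] at hj ⊢
        obtain ⟨t, ht, rfl⟩ := hj
        have htm : t ≤ m := by omega
        have : D * t ≤ D * m := Nat.mul_le_mul_left D htm
        omega
      · intro j hj hj2
        simp only [Finset.mem_image, Finset.mem_range] at hj hj2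
        have : ¬ D ∣ j := by
          rintro ⟨t, rfl⟩
          have hDt : D * t ≤ D * m := by omega
          have : t ≤ m := Nat.le_of_mul_le_mul_left hDt (by omega)
          exact hj2 ⟨t, by omega, rfl⟩
        rw [if_neg this, zero_mul]
    rw [hstepA, Finset.sum_image (fun x _ y _ h => Nat.eq_of_mul_eq_mul_left (by omega) h)]
    apply Finset.sum_congr rfl
    intro t ht
    simp only [Finset.mem_range] at ht
    have h1 : D * m - D * t = D * (m - t) := (Nat.mul_sub_left_distrib D m t).symm
    rw [if_pos (Dvd.intro t rfl), if_pos (h1 ▸ Dvd.intro (m - t) rfl),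
      Nat.mul_div_cancel_left t (by omega), h1, Nat.mul_div_cancel_left (m - t) (by omega)]
  · rw [if_neg hn]
    apply Finset.sum_eq_zero
    intro j hj
    simp only [Finset.mem_range] at hj
    by_cases h1 : D ∣ j
    · by_cases h2 : D ∣ n - j
      · exfalso
        exact hn (by rw [show n = j + (n - j) by omega]; exact Nat.dvd_add h1 h2)
      · rw [if_neg h2, mul_zero]
    · rw [if_neg h1, zero_mul]

lemma substPow_split (d e : ℕ) (hd : 1 ≤ d) (he : 1 ≤ e) (r : ℕ → ℝ) (N : ℕ) :
    substPow d r N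
      = ∑ α ∈ Finset.range e, xPowMul (d * α) (substPow (d * e) (apSub e α r)) N := by
  unfold substPow xPowMul apSub
  beta_reduce
  by_cases hdN : d ∣ N
  · obtain ⟨M, rfl⟩ := hdN
    rw [if_pos (Dvd.intro M rfl), Nat.mul_div_cancel_left M (by omega)]
    rw [Finset.sum_eq_single (M % e)]
    · have hle : M % e ≤ M := Nat.mod_le M e
      rw [if_pos (Nat.mul_le_mul_left d hle)]
      have h1 : d * M - d * (M % e) = d * (M - M % e) := (Nat.mul_sub_left_distrib d M (M % e)).symm
      have h2 : e ∣ M - M % e := Nat.dvd_sub_mod M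
      rw [h1]
      beta_reduce
      rw [if_pos (mul_dvd_mul_left d h2),
        Nat.mul_div_mul_left (M - M % e) e (by omega),
        Nat.mul_div_cancel' h2,
        show M - M % e + M % e = M by omega]
    · intro α hα hne
      simp only [Finset.mem_range] at hα
      beta_reduce
      split_ifs with hle2 hdvd
      · exfalso
        have hdα : d * α ≤ d * M := hle2
        have hαM : α ≤ M := Nat.le_of_mul_le_mul_left hdα (by omega)
        rw [(Nat.mul_sub_left_distrib d M α).symm] at hdvd
        obtain ⟨t, ht⟩ := hdvd
        have h' : d * (M - α) = d * (e * t) := by rw [ht]; ring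
        have hMe : M - α = e * t := Nat.eq_of_mul_eq_mul_left (by omega) h'
        have hM : M = α + e * t := by omega
        rw [hM, Nat.add_mul_mod_self_left, Nat.mod_eq_of_lt hα] at hne
        exact hne rfl
      · rfl
      · rfl
    · intro h
      exact absurd (Finset.mem_range.mpr (Nat.mod_lt M (by omega))) h
  · rw [if_neg hdN]
    symm
    apply Finset.sum_eq_zero
    intro α hα
    beta_reduce
    split_ifs with h1 h2
    · exfalso
      exact hdN (by
        rw [show N = (N - d * α) + d * α by omega]
        exact Nat.dvd_add (dvd_trans (Dvd.intro e rfl) h2) (Dvd.intro α rfl))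
    · rfl
    · rfl
-- ### expansion of a product of two substituted series

lemma mk_sum {ι : Type*} (s : Finset ι) (F : ι → ℕ → ℝ) :
    PowerSeries.mk (fun n => ∑ i ∈ s, F i n) = ∑ i ∈ s, PowerSeries.mk (F i) := by
  ext n
  rw [PowerSeries.coeff_mk, map_sum]
  simp [PowerSeries.coeff_mk]

lemma mk_substPow_split (d e : ℕ) (hd : 1 ≤ d) (he : 1 ≤ e) (r : ℕ → ℝ) :
    PowerSeries.mk (substPow d r)
      = ∑ α ∈ Finset.range e,
          (PowerSeries.X : ℝ⟦X⟧) ^ (d * α) * PowerSeries.mk (substPow (d * e) (apSub e α r)) := by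
  have : PowerSeries.mk (substPow d r)
      = PowerSeries.mk (fun N => ∑ α ∈ Finset.range e,
          xPowMul (d * α) (substPow (d * e) (apSub e α r)) N) := by
    ext n
    rw [PowerSeries.coeff_mk, PowerSeries.coeff_mk]
    exact substPow_split d e hd he r n
  rw [this, mk_sum]
  exact Finset.sum_congr rfl fun α _ => mk_xPowMul _ _

lemma mk_substPow_mul_substPow (D : ℕ) (hD : 1 ≤ D) (a b : ℕ → ℝ) :
    PowerSeries.mk (substPow D a) * PowerSeries.mk (substPow D b)
      = PowerSeries.mk (substPow D (cauchy a b)) := by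
  rw [← mk_cauchy]
  ext n
  rw [PowerSeries.coeff_mk, PowerSeries.coeff_mk]
  exact substPow_cauchy_substPow D hD a b n

lemma cauchy_substPow_expand (d e : ℕ) (hd : 1 ≤ d) (he : 1 ≤ e) (r s : ℕ → ℝ) (n : ℕ) :
    cauchy (substPow d r) (substPow e s) n
      = ∑ α ∈ Finset.range e, ∑ β ∈ Finset.range d,
          cauchy (delta (d * α + e * β))
            (substPow (d * e) (cauchy (apSub e α r) (apSub d β s))) n := by
  apply funeq_of_mk_eq ?_ n
  have hR : PowerSeries.mk (fun n => ∑ α ∈ Finset.range e, ∑ β ∈ Finset.range d,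
      cauchy (delta (d * α + e * β))
        (substPow (d * e) (cauchy (apSub e α r) (apSub d β s))) n)
      = ∑ α ∈ Finset.range e, ∑ β ∈ Finset.range d,
          PowerSeries.mk (cauchy (delta (d * α + e * β))
            (substPow (d * e) (cauchy (apSub e α r) (apSub d β s)))) := by
    rw [mk_sum]
    exact Finset.sum_congr rfl fun α _ => mk_sum _ _
  rw [hR]
  calc PowerSeries.mk (cauchy (substPow d r) (substPow e s))
      = PowerSeries.mk (substPow d r) * PowerSeries.mk (substPow e s) := mk_cauchy _ _
    _ = (∑ α ∈ Finset.range e,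
          (PowerSeries.X : ℝ⟦X⟧) ^ (d * α) * PowerSeries.mk (substPow (d * e) (apSub e α r)))
        * (∑ β ∈ Finset.range d,
          (PowerSeries.X : ℝ⟦X⟧) ^ (e * β) * PowerSeries.mk (substPow (d * e) (apSub d β s))) := by
        rw [mk_substPow_split d e hd he r, mk_substPow_split e d he hd s, Nat.mul_comm e d]
    _ = ∑ α ∈ Finset.range e, ∑ β ∈ Finset.range d,
          ((PowerSeries.X : ℝ⟦X⟧) ^ (d * α) * PowerSeries.mk (substPow (d * e) (apSub e α r)))
          * ((PowerSeries.X : ℝ⟦X⟧) ^ (e * β) * PowerSeries.mk (substPow (d * e) (apSub d β s))) :=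
        Finset.sum_mul_sum _ _ _ _
    _ = ∑ α ∈ Finset.range e, ∑ β ∈ Finset.range d,
          PowerSeries.mk (cauchy (delta (d * α + e * β))
            (substPow (d * e) (cauchy (apSub e α r) (apSub d β s)))) := by
        apply Finset.sum_congr rfl
        intro α _
        apply Finset.sum_congr rfl
        intro β _
        rw [mul_mul_mul_comm, ← pow_add,
          mk_substPow_mul_substPow (d * e) (Nat.one_le_iff_ne_zero.mpr (by positivity)) _ _,
          ← mk_delta, ← mk_cauchy]
-- ### analytic core

lemma RT1.ratio_bounds {r : ℕ → ℝ} (h : RT1 r) {η : ℝ} (hη : 0 < η) (hη1 : η ≤ 1) :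
    ∃ K : ℕ, 1 ≤ K ∧ ∀ m, K ≤ m →
      0 < r m ∧ r (m + 1) ≤ (1 + η) * r m ∧ r m ≤ (1 + η) * r (m + 1) := by
  obtain ⟨hpos, hrat⟩ := h
  have h2 : ∀ᶠ n in atTop, |r (n - 1) / r n - 1| < η / 2 := by
    have := Metric.tendsto_nhds.mp hrat (η / 2) (by positivity)
    simpa [Real.dist_eq] using this
  obtain ⟨K0, hK0⟩ := Filter.eventually_atTop.mp (h2.and hpos)
  refine ⟨K0 + 1, by omega, fun m hm => ?_⟩
  have hm1 := hK0 (m + 1) (by omega)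
  have hm0 := hK0 m (by omega)
  have hpos1 : 0 < r (m + 1) := hm1.2
  have hpos0 : 0 < r m := hm0.2
  have hsimp : (m + 1) - 1 = m := by omega
  rw [hsimp] at hm1
  have habs := abs_lt.mp hm1.1
  have hdiv1 : r m / r (m + 1) < 1 + η / 2 := by linarith [habs.2]
  have hdiv2 : 1 - η / 2 < r m / r (m + 1) := by linarith [habs.1]
  rw [div_lt_iff₀ hpos1] at hdiv1
  rw [lt_div_iff₀ hpos1] at hdiv2
  refine ⟨hpos0, ?_, by nlinarith⟩
  nlinarith

lemma cauchy_pos {r s : ℕ → ℝ} (hr0 : ∀ n, 0 ≤ r n) (hs0 : ∀ n, 0 ≤ s n) {K : ℕ}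
    (hrp : ∀ m, K ≤ m → 0 < r m) (hsp : ∀ m, K ≤ m → 0 < s m) {n : ℕ} (hn : 2 * K ≤ n) :
    0 < cauchy r s n := by
  unfold cauchy
  have hKmem : K ∈ Finset.range (n + 1) := by simp; omega
  have hterm : 0 < r K * s (n - K) := mul_pos (hrp K le_rfl) (hsp _ (by omega))
  exact lt_of_lt_of_le hterm
    (Finset.single_le_sum (fun j _ => mul_nonneg (hr0 j) (hs0 (n - j))) hKmem)

section ratio

variable {r s : ℕ → ℝ} {η : ℝ} {K : ℕ}

lemma cauchy_ratio_up (hη : 0 < η)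
    (hr0 : ∀ n, 0 ≤ r n) (hs0 : ∀ n, 0 ≤ s n)
    (hr : ∀ m, K ≤ m → 0 < r m ∧ r (m + 1) ≤ (1 + η) * r m ∧ r m ≤ (1 + η) * r (m + 1))
    (hs : ∀ m, K ≤ m → 0 < s m ∧ s (m + 1) ≤ (1 + η) * s m ∧ s m ≤ (1 + η) * s (m + 1))
    {n : ℕ} (hn : 2 * K + 2 ≤ n) :
    cauchy r s n ≤ (1 + η) * cauchy r s (n + 1) := by
  set h := n / 2 with hh
  have hKh : K + 1 ≤ h := by omega
  have hhn : h + 1 ≤ n + 1 := by omega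
  have hKnh : K ≤ n - h := by omega
  unfold cauchy
  rw [← Finset.sum_range_add_sum_Ico _ hhn]
  have hP1 : ∑ j ∈ Finset.range (h + 1), r j * s (n - j)
      ≤ ∑ j ∈ Finset.range (h + 1), (1 + η) * (r j * s (n + 1 - j)) := by
    apply Finset.sum_le_sum
    intro j hj
    simp only [Finset.mem_range] at hj
    have hKj : K ≤ n - j := by omega
    have := (hs (n - j) hKj).2.2
    have hrw : n - j + 1 = n + 1 - j := by omega
    rw [hrw] at this
    have := mul_le_mul_of_nonneg_left this (hr0 j)
    nlinarith
  have hP2 : ∑ j ∈ Finset.Ico (h + 1) (n + 1), r j * s (n - j)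
      ≤ ∑ j ∈ Finset.Ico (h + 1) (n + 1), (1 + η) * (r (j + 1) * s (n - j)) := by
    apply Finset.sum_le_sum
    intro j hj
    simp only [Finset.mem_Ico] at hj
    have := (hr j (by omega)).2.2
    have := mul_le_mul_of_nonneg_right this (hs0 (n - j))
    nlinarith
  have hre : ∑ j ∈ Finset.Ico (h + 1) (n + 1), r (j + 1) * s (n - j)
      = ∑ i ∈ Finset.Ico (h + 2) (n + 2), r i * s (n + 1 - i) := by
    rw [Finset.sum_Ico_eq_sum_range, Finset.sum_Ico_eq_sum_range]
    apply Finset.sum_congr (by congr 1 <;> omega)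
    intro t ht
    simp only [Finset.mem_range] at ht
    have e1 : h + 1 + t + 1 = h + 2 + t := by omega
    have e2 : n - (h + 1 + t) = n + 1 - (h + 2 + t) := by omega
    rw [e1, e2]
  have hsub : ∑ j ∈ Finset.range (h + 1), r j * s (n + 1 - j)
        + ∑ i ∈ Finset.Ico (h + 2) (n + 2), r i * s (n + 1 - i)
      ≤ ∑ j ∈ Finset.range (n + 2), r j * s (n + 1 - j) := by
    rw [← Finset.sum_range_add_sum_Ico (fun j => r j * s (n + 1 - j)) (show h + 1 ≤ n + 2 by omega)]
    apply add_le_add le_rfl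
    apply Finset.sum_le_sum_of_subset_of_nonneg
    · exact Finset.Ico_subset_Ico (by omega) le_rfl
    · exact fun j _ _ => mul_nonneg (hr0 j) (hs0 (n + 1 - j))
  calc ∑ j ∈ Finset.range (h + 1), r j * s (n - j)
        + ∑ j ∈ Finset.Ico (h + 1) (n + 1), r j * s (n - j)
      ≤ ∑ j ∈ Finset.range (h + 1), (1 + η) * (r j * s (n + 1 - j))
        + ∑ j ∈ Finset.Ico (h + 1) (n + 1), (1 + η) * (r (j + 1) * s (n - j)) :=
        add_le_add hP1 hP2
    _ = (1 + η) * (∑ j ∈ Finset.range (h + 1), r j * s (n + 1 - j)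
        + ∑ i ∈ Finset.Ico (h + 2) (n + 2), r i * s (n + 1 - i)) := by
        rw [← Finset.mul_sum, ← Finset.mul_sum, ← mul_add, hre]
    _ ≤ (1 + η) * ∑ j ∈ Finset.range (n + 2), r j * s (n + 1 - j) := by
        apply mul_le_mul_of_nonneg_left hsub (by linarith)

lemma cauchy_ratio_down (hη : 0 < η)
    (hr0 : ∀ n, 0 ≤ r n) (hs0 : ∀ n, 0 ≤ s n)
    (hr : ∀ m, K ≤ m → 0 < r m ∧ r (m + 1) ≤ (1 + η) * r m ∧ r m ≤ (1 + η) * r (m + 1))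
    (hs : ∀ m, K ≤ m → 0 < s m ∧ s (m + 1) ≤ (1 + η) * s m ∧ s m ≤ (1 + η) * s (m + 1))
    {n : ℕ} (hn : 2 * K + 2 ≤ n) :
    cauchy r s (n + 1) ≤ (1 + η) * (cauchy r s n + r (n / 2) * s (n - n / 2)) := by
  set h := n / 2 with hh
  have hKh : K + 1 ≤ h := by omega
  unfold cauchy
  rw [← Finset.sum_range_add_sum_Ico (fun j => r j * s (n + 1 - j)) (show h + 1 ≤ n + 2 by omega)]
  have hP1 : ∑ j ∈ Finset.range (h + 1), r j * s (n + 1 - j)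
      ≤ ∑ j ∈ Finset.range (h + 1), (1 + η) * (r j * s (n - j)) := by
    apply Finset.sum_le_sum
    intro j hj
    simp only [Finset.mem_range] at hj
    have hKj : K ≤ n - j := by omega
    have := (hs (n - j) hKj).2.1
    have hrw : n - j + 1 = n + 1 - j := by omega
    rw [hrw] at this
    have := mul_le_mul_of_nonneg_left this (hr0 j)
    nlinarith
  have hP2 : ∑ j ∈ Finset.Ico (h + 1) (n + 2), r j * s (n + 1 - j)
      ≤ ∑ j ∈ Finset.Ico (h + 1) (n + 2), (1 + η) * (r (j - 1) * s (n + 1 - j)) := by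
    apply Finset.sum_le_sum
    intro j hj
    simp only [Finset.mem_Ico] at hj
    have h1 := (hr (j - 1) (by omega)).2.1
    have hrw : j - 1 + 1 = j := by omega
    rw [hrw] at h1
    have := mul_le_mul_of_nonneg_right h1 (hs0 (n + 1 - j))
    nlinarith
  have hre : ∑ j ∈ Finset.Ico (h + 1) (n + 2), r (j - 1) * s (n + 1 - j)
      = ∑ i ∈ Finset.Ico h (n + 1), r i * s (n - i) := by
    rw [Finset.sum_Ico_eq_sum_range, Finset.sum_Ico_eq_sum_range]
    apply Finset.sum_congr (by congr 1 <;> omega)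
    intro t ht
    simp only [Finset.mem_range] at ht
    have e1 : h + 1 + t - 1 = h + t := by omega
    have e2 : n + 1 - (h + 1 + t) = n - (h + t) := by omega
    rw [e1, e2]
  have hsplit : ∑ i ∈ Finset.Ico h (n + 1), r i * s (n - i)
      = r h * s (n - h) + ∑ i ∈ Finset.Ico (h + 1) (n + 1), r i * s (n - i) :=
    Finset.sum_eq_sum_Ico_succ_bot (by omega) _
  calc ∑ j ∈ Finset.range (h + 1), r j * s (n + 1 - j)
        + ∑ j ∈ Finset.Ico (h + 1) (n + 2), r j * s (n + 1 - j)
      ≤ ∑ j ∈ Finset.range (h + 1), (1 + η) * (r j * s (n - j))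
        + ∑ j ∈ Finset.Ico (h + 1) (n + 2), (1 + η) * (r (j - 1) * s (n + 1 - j)) :=
        add_le_add hP1 hP2
    _ = (1 + η) * (∑ j ∈ Finset.range (h + 1), r j * s (n - j)
        + (r h * s (n - h) + ∑ i ∈ Finset.Ico (h + 1) (n + 1), r i * s (n - i))) := by
        rw [← Finset.mul_sum, ← Finset.mul_sum, ← mul_add, hre, hsplit]
    _ = (1 + η) * (∑ j ∈ Finset.range (n + 1), r j * s (n - j) + r h * s (n - h)) := by
        rw [← Finset.sum_range_add_sum_Ico (fun j => r j * s (n - j)) (show h + 1 ≤ n + 1 by omega)]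
        ring

lemma step_up (hη : 0 < η) (hη1 : η ≤ 1) (hr0 : ∀ n, 0 ≤ r n)
    (hr : ∀ m, K ≤ m → 0 < r m ∧ r (m + 1) ≤ (1 + η) * r m ∧ r m ≤ (1 + η) * r (m + 1)) :
    ∀ t m, K ≤ m → (1 - η) ^ t * r m ≤ r (m + t) := by
  intro t
  induction t with
  | zero => intro m _; simp
  | succ t ih =>
      intro m hm
      have h1 := ih m hm
      have h2 := (hr (m + t) (by omega)).2.2
      have h3 := (hr (m + t + 1) (by omega)).1
      have hnn : (0:ℝ) ≤ (1 - η) ^ t := pow_nonneg (by linarith) t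
      have h4 : (1 - η) * r (m + t) ≤ (1 - η) * ((1 + η) * r (m + t + 1)) :=
        mul_le_mul_of_nonneg_left h2 (by linarith)
      calc (1 - η) ^ (t + 1) * r m = (1 - η) * ((1 - η) ^ t * r m) := by ring
        _ ≤ (1 - η) * r (m + t) := mul_le_mul_of_nonneg_left h1 (by linarith)
        _ ≤ r (m + t + 1) := by nlinarith [mul_nonneg (sq_nonneg η) h3.le]

lemma step_down (hη : 0 < η) (hη1 : η ≤ 1) (hr0 : ∀ n, 0 ≤ r n)
    (hr : ∀ m, K ≤ m → 0 < r m ∧ r (m + 1) ≤ (1 + η) * r m ∧ r m ≤ (1 + η) * r (m + 1)) :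
    ∀ t m, K + t ≤ m → (1 - η) ^ t * r m ≤ r (m - t) := by
  intro t
  induction t with
  | zero => intro m _; simp
  | succ t ih =>
      intro m hm
      have h1 := (hr (m - 1) (by omega)).2.1
      have hrw : m - 1 + 1 = m := by omega
      rw [hrw] at h1
      have h2 := (hr (m - 1) (by omega)).1
      have h3 := ih (m - 1) (by omega)
      have hrw2 : m - 1 - t = m - (t + 1) := by omega
      rw [hrw2] at h3
      have hnn : (0:ℝ) ≤ (1 - η) ^ t := pow_nonneg (by linarith) t
      have h4 : (1 - η) * r m ≤ r (m - 1) := by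
        have h5 : (1 - η) * r m ≤ (1 - η) * ((1 + η) * r (m - 1)) :=
          mul_le_mul_of_nonneg_left h1 (by linarith)
        nlinarith [mul_nonneg (sq_nonneg η) h2.le]
      calc (1 - η) ^ (t + 1) * r m = (1 - η) ^ t * ((1 - η) * r m) := by ring
        _ ≤ (1 - η) ^ t * r (m - 1) := mul_le_mul_of_nonneg_left h4 hnn
        _ ≤ r (m - (t + 1)) := h3

lemma cauchy_window (hη : 0 < η) (hη1 : η ≤ 1)
    (hr0 : ∀ n, 0 ≤ r n) (hs0 : ∀ n, 0 ≤ s n)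
    (hr : ∀ m, K ≤ m → 0 < r m ∧ r (m + 1) ≤ (1 + η) * r m ∧ r m ≤ (1 + η) * r (m + 1))
    (hs : ∀ m, K ≤ m → 0 < s m ∧ s (m + 1) ≤ (1 + η) * s m ∧ s m ≤ (1 + η) * s (m + 1))
    {J n : ℕ} (hJη : (J : ℝ) * η ≤ 1 / 4) (hn : 2 * K + 2 * J + 2 ≤ n) :
    ((J : ℝ) + 1) * (r (n / 2) * s (n - n / 2)) ≤ 2 * cauchy r s n := by
  set h := n / 2 with hh
  have hKh : K + 1 ≤ h := by omega
  have hKnh : K + J ≤ n - h := by omega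
  have hhJ : h + J ≤ n := by omega
  have hpow : (1 : ℝ) / 2 ≤ (1 - η) ^ (2 * J) := by
    have := one_add_mul_le_pow (a := -η) (by linarith) (2 * J)
    have hcast : (1 : ℝ) + (2 * J : ℕ) * (-η) = 1 - 2 * (J : ℝ) * η := by push_cast; ring
    rw [hcast, show (1:ℝ) + -η = 1 - η from by ring] at this
    linarith
  have hterm : ∀ t, t ≤ J → (1 : ℝ) / 2 * (r h * s (n - h)) ≤ r (h + t) * s (n - h - t) := by
    intro t ht
    have h1 : (1 - η) ^ t * r h ≤ r (h + t) := step_up hη hη1 hr0 hr t h (by omega)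
    have h2 : (1 - η) ^ t * s (n - h) ≤ s (n - h - t) :=
      step_down hη hη1 hs0 hs t (n - h) (by omega)
    have hp1 : (0:ℝ) ≤ (1 - η) ^ t := pow_nonneg (by linarith) t
    have hp2 : ((1 - η) ^ t * r h) * ((1 - η) ^ t * s (n - h)) ≤ r (h + t) * s (n - h - t) :=
      mul_le_mul h1 h2 (mul_nonneg hp1 (hs0 _)) (hr0 _)
    have heq : ((1 - η) ^ t * r h) * ((1 - η) ^ t * s (n - h))
        = (1 - η) ^ (2 * t) * (r h * s (n - h)) := by
      rw [two_mul, pow_add]; ring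
    rw [heq] at hp2
    have hmono : (1 - η) ^ (2 * J) ≤ (1 - η) ^ (2 * t) :=
      pow_le_pow_of_le_one (by linarith) (by linarith) (by omega)
    have hW : 0 ≤ r h * s (n - h) := mul_nonneg (hr0 _) (hs0 _)
    nlinarith [mul_le_mul_of_nonneg_right hmono hW, mul_le_mul_of_nonneg_right hpow hW]
  have hsum : ∑ t ∈ Finset.range (J + 1), r (h + t) * s (n - h - t) ≤ cauchy r s n := by
    unfold cauchy
    have : ∑ t ∈ Finset.range (J + 1), r (h + t) * s (n - h - t)
        = ∑ j ∈ Finset.Ico h (h + J + 1), r j * s (n - j) := by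
      rw [Finset.sum_Ico_eq_sum_range]
      apply Finset.sum_congr (by congr 1; omega)
      intro t ht
      simp only [Finset.mem_range] at ht
      have e2 : n - (h + t) = n - h - t := by omega
      rw [e2]
    rw [this]
    apply Finset.sum_le_sum_of_subset_of_nonneg
    · intro j hj
      simp only [Finset.mem_Ico, Finset.mem_range] at hj ⊢
      omega
    · exact fun j _ _ => mul_nonneg (hr0 j) (hs0 (n - j))
  have hlow : ((J : ℝ) + 1) * ((1:ℝ)/2 * (r h * s (n - h)))
      ≤ ∑ t ∈ Finset.range (J + 1), r (h + t) * s (n - h - t) := by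
    have := Finset.card_nsmul_le_sum (Finset.range (J + 1))
      (fun t => r (h + t) * s (n - h - t)) ((1:ℝ)/2 * (r h * s (n - h)))
      (fun t ht => hterm t (by simpa [Finset.mem_range] using Nat.lt_succ_iff.mp (Finset.mem_range.mp ht)))
    rw [Finset.card_range] at this
    calc ((J : ℝ) + 1) * ((1:ℝ)/2 * (r h * s (n - h)))
        = (J + 1 : ℕ) • ((1:ℝ)/2 * (r h * s (n - h))) := by
          rw [nsmul_eq_mul]; push_cast; ring
      _ ≤ _ := this
  nlinarith [hsum, hlow]

end ratio
-- ### RTN1 closure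

set_option maxHeartbeats 1000000 in
lemma RTN1_cauchy {r s : ℕ → ℝ} (hr : RTN1 r) (hs : RTN1 s) : RTN1 (cauchy r s) := by
  obtain ⟨hrRT, hrN⟩ := hr
  obtain ⟨hsRT, hsN⟩ := hs
  have hr0 := natSeries_nonneg hrN
  have hs0 := natSeries_nonneg hsN
  refine ⟨⟨?_, ?_⟩, natSeries_cauchy hrN hsN⟩
  · -- eventual positivity
    obtain ⟨Kr, _, hKr⟩ := hrRT.ratio_bounds one_pos le_rfl
    obtain ⟨Ks, _, hKs⟩ := hsRT.ratio_bounds one_pos le_rfl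
    refine Filter.eventually_atTop.mpr ⟨2 * max Kr Ks, fun n hn => ?_⟩
    exact cauchy_pos hr0 hs0 (fun m hm => (hKr m (le_trans (le_max_left _ _) hm)).1)
      (fun m hm => (hKs m (le_trans (le_max_right _ _) hm)).1) hn
  · -- ratio tendsto 1
    rw [Metric.tendsto_atTop]
    intro ε hε
    set δ : ℝ := min 1 (ε / 2) with hδdef
    have hδ : 0 < δ := by apply lt_min one_pos; positivity
    have hδ1 : δ ≤ 1 := min_le_left _ _
    have hδε : δ ≤ ε / 2 := min_le_right _ _
    set J : ℕ := ⌈(8 : ℝ) / δ⌉₊ with hJdef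
    have hJ8 : (8 : ℝ) / δ ≤ J := Nat.le_ceil _
    have hJpos : 0 < (J : ℝ) := lt_of_lt_of_le (by positivity) hJ8
    set η : ℝ := min (δ / 4) (1 / (4 * J)) with hηdef
    have hη : 0 < η := lt_min (by positivity) (by positivity)
    have hη1 : η ≤ 1 := le_trans (min_le_left _ _) (by linarith)
    have hJη : (J : ℝ) * η ≤ 1 / 4 := by
      have h1 : η ≤ 1 / (4 * J) := min_le_right _ _
      have := mul_le_mul_of_nonneg_left h1 hJpos.le
      calc (J : ℝ) * η ≤ (J : ℝ) * (1 / (4 * J)) := this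
        _ = 1 / 4 := by field_simp
    have h2J : 2 / ((J : ℝ) + 1) ≤ δ / 4 := by
      rw [div_le_div_iff₀ (by positivity) (by norm_num)]
      have : (8 : ℝ) ≤ δ * J := by
        rw [div_le_iff₀ hδ] at hJ8
        linarith
      nlinarith
    obtain ⟨Kr, hKr1, hKr⟩ := hrRT.ratio_bounds hη hη1
    obtain ⟨Ks, hKs1, hKs⟩ := hsRT.ratio_bounds hη hη1
    set K := max Kr Ks with hK
    have hrB : ∀ m, K ≤ m → 0 < r m ∧ r (m + 1) ≤ (1 + η) * r m ∧ r m ≤ (1 + η) * r (m + 1) :=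
      fun m hm => hKr m (le_trans (le_max_left _ _) hm)
    have hsB : ∀ m, K ≤ m → 0 < s m ∧ s (m + 1) ≤ (1 + η) * s m ∧ s m ≤ (1 + η) * s (m + 1) :=
      fun m hm => hKs m (le_trans (le_max_right _ _) hm)
    refine ⟨2 * K + 2 * J + 3, fun n hn => ?_⟩
    obtain ⟨m, rfl⟩ : ∃ m, n = m + 1 := ⟨n - 1, by omega⟩
    have hmbig : 2 * K + 2 * J + 2 ≤ m := by omega
    have hcm : 0 < cauchy r s m :=
      cauchy_pos hr0 hs0 (fun t ht => (hrB t ht).1) (fun t ht => (hsB t ht).1) (by omega)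
    have hcm1 : 0 < cauchy r s (m + 1) :=
      cauchy_pos hr0 hs0 (fun t ht => (hrB t ht).1) (fun t ht => (hsB t ht).1) (by omega)
    have hup : cauchy r s m ≤ (1 + η) * cauchy r s (m + 1) :=
      cauchy_ratio_up hη hr0 hs0 hrB hsB (by omega)
    have hdown : cauchy r s (m + 1) ≤ (1 + η) * (cauchy r s m + r (m / 2) * s (m - m / 2)) :=
      cauchy_ratio_down hη hr0 hs0 hrB hsB (by omega)
    have hwin : ((J : ℝ) + 1) * (r (m / 2) * s (m - m / 2)) ≤ 2 * cauchy r s m :=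
      cauchy_window hη hη1 hr0 hs0 hrB hsB hJη (by omega)
    have hWsmall : r (m / 2) * s (m - m / 2) ≤ (δ / 4) * cauchy r s m := by
      have hW0 : 0 ≤ r (m / 2) * s (m - m / 2) := mul_nonneg (hr0 _) (hs0 _)
      have h1 : r (m / 2) * s (m - m / 2) ≤ 2 / ((J : ℝ) + 1) * cauchy r s m := by
        rw [div_mul_eq_mul_div, le_div_iff₀ (by positivity)]
        nlinarith
      calc r (m / 2) * s (m - m / 2) ≤ 2 / ((J : ℝ) + 1) * cauchy r s m := h1
        _ ≤ (δ / 4) * cauchy r s m := mul_le_mul_of_nonneg_right h2J hcm.le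
    have hdown2 : cauchy r s (m + 1) ≤ (1 + δ) * cauchy r s m := by
      have hη4 : η ≤ δ / 4 := min_le_left _ _
      calc cauchy r s (m + 1) ≤ (1 + η) * (cauchy r s m + r (m / 2) * s (m - m / 2)) := hdown
        _ ≤ (1 + δ / 4) * (cauchy r s m + (δ / 4) * cauchy r s m) := by
            apply mul_le_mul (by linarith) (by linarith) (by nlinarith [mul_nonneg (hr0 (m/2)) (hs0 (m - m/2))]) (by linarith)
        _ = (1 + δ / 4) * (1 + δ / 4) * cauchy r s m := by ring
        _ ≤ (1 + δ) * cauchy r s m := by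
            have hsq : (1 + δ / 4) * (1 + δ / 4) ≤ 1 + δ := by
              nlinarith [mul_nonneg hδ.le (show (0:ℝ) ≤ 1 - δ by linarith)]
            exact mul_le_mul_of_nonneg_right hsq hcm.le
    -- conclude
    have hratio_up : cauchy r s m / cauchy r s (m + 1) ≤ 1 + η := by
      rw [div_le_iff₀ hcm1]
      linarith [hup]
    have hratio_low : 1 - δ ≤ cauchy r s m / cauchy r s (m + 1) := by
      rw [le_div_iff₀ hcm1]
      nlinarith [mul_le_mul_of_nonneg_left hdown2 (show (0:ℝ) ≤ 1 - δ by linarith),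
        mul_nonneg (mul_nonneg hδ.le hδ.le) hcm.le]
    have hη4' : η ≤ δ / 4 := min_le_left _ _
    have hδε' : δ < ε := by linarith
    clear_value K J η δ
    rw [Real.dist_eq, Nat.add_sub_cancel, abs_lt]
    constructor
    · linarith
    · linarith

lemma tendsto_shift_ratio {r : ℕ → ℝ} (h : RT1 r) (k : ℕ) :
    Filter.Tendsto (fun n => r (n - k) / r n) Filter.atTop (nhds 1) := by
  induction k with
  | zero =>
      apply Filter.Tendsto.congr' ?_ tendsto_const_nhds
      filter_upwards [h.1] with n hn
      simp [div_self hn.ne']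
  | succ k ih =>
      have h1 : Filter.Tendsto (fun n => r ((n - k) - 1) / r (n - k)) Filter.atTop (nhds 1) :=
        h.2.comp (tendsto_sub_atTop_nat k)
      have h2 := h1.mul ih
      rw [mul_one] at h2
      apply Filter.Tendsto.congr' ?_ h2
      have hev : ∀ᶠ n in Filter.atTop, 0 < r (n - k) :=
        (tendsto_sub_atTop_nat k).eventually h.1
      filter_upwards [hev, Filter.eventually_atTop.mpr ⟨k + 1, fun n hn => hn⟩] with n hn hnk
      have e1 : n - k - 1 = n - (k + 1) := by omega
      rw [e1]
      field_simp

lemma RTN1_apSub {r : ℕ → ℝ} (h : RTN1 r) {e : ℕ} (he : 1 ≤ e) (α : ℕ) :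
    RTN1 (apSub e α r) := by
  obtain ⟨⟨hpos, hrat⟩, hN⟩ := h
  have hmono : Filter.Tendsto (fun n => e * n + α) Filter.atTop Filter.atTop := by
    apply Filter.tendsto_atTop_mono (f := fun n => n) ?_ Filter.tendsto_id
    intro n
    calc n = 1 * n := (one_mul n).symm
      _ ≤ e * n := Nat.mul_le_mul_right n he
      _ ≤ e * n + α := Nat.le_add_right _ _
  constructor
  constructor
  · exact hmono.eventually hpos
  · have h1 : Filter.Tendsto (fun n => r ((e * n + α) - e) / r (e * n + α))
        Filter.atTop (nhds 1) :=
      (tendsto_shift_ratio ⟨hpos, hrat⟩ e).comp hmono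
    apply Filter.Tendsto.congr' ?_ h1
    filter_upwards [Filter.eventually_atTop.mpr ⟨1, fun n hn => hn⟩] with n hn
    have e1 : e * n + α - e = e * (n - 1) + α := by
      have : e * (n - 1) = e * n - e * 1 := Nat.mul_sub_left_distrib e n 1
      have h2 : e * 1 ≤ e * n := Nat.mul_le_mul_left e hn
      omega
    rw [e1]
    rfl
  · intro n
    exact hN _
-- ### Shape machinery

def Shape (a : ℕ → ℝ) : Prop :=
  ∃ (k : ℕ) (p : ℕ → (ℕ → ℝ)) (R : ℕ → (ℕ → ℝ)) (d : ℕ → ℕ),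
    IsNatPoly (p 0) ∧
    (∀ i ∈ Finset.Icc 1 k, IsNatPoly (p i) ∧ RTN1 (R i) ∧ 1 ≤ d i) ∧
    ∀ n, a n = p 0 n + ∑ i ∈ Finset.Icc 1 k, cauchy (p i) (substPow (d i) (R i)) n

lemma Shape.congr {a b : ℕ → ℝ} (h : ∀ n, a n = b n) (ha : Shape a) : Shape b := by
  obtain ⟨k, p, R, d, h0, hi, heq⟩ := ha
  exact ⟨k, p, R, d, h0, hi, fun n => (h n) ▸ heq n⟩

def onesSeq : ℕ → ℝ := fun _ => 1

lemma RTN1_ones : RTN1 onesSeq := by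
  refine ⟨⟨Filter.Eventually.of_forall fun n => one_pos, ?_⟩, fun n => ⟨1, by simp [onesSeq]⟩⟩
  have : (fun n : ℕ => onesSeq (n - 1) / onesSeq n) = fun _ => (1 : ℝ) := by
    funext n; simp [onesSeq]
  rw [this]
  exact tendsto_const_nhds

lemma Shape_poly {p : ℕ → ℝ} (hp : IsNatPoly p) : Shape p := by
  refine ⟨0, fun _ => p, fun _ => onesSeq, fun _ => 1, hp, ?_, ?_⟩
  · intro i hi
    rw [Finset.Icc_eq_empty (by omega)] at hi
    exact absurd hi (Finset.notMem_empty i)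
  · intro n
    rw [Finset.Icc_eq_empty (by omega), Finset.sum_empty, add_zero]

lemma Shape_atom {p r : ℕ → ℝ} {d : ℕ} (hp : IsNatPoly p) (hr : RTN1 r) (hd : 1 ≤ d) :
    Shape (cauchy p (substPow d r)) := by
  refine ⟨1, fun i => if i = 0 then (fun _ => 0) else p, fun _ => r, fun _ => d, ?_, ?_, ?_⟩
  · simpa using natPoly_zero
  · intro i hi
    simp only [Finset.mem_Icc] at hi
    beta_reduce
    rw [if_neg (show ¬ i = 0 by omega)]
    exact ⟨hp, hr, hd⟩
  · intro n
    beta_reduce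
    rw [Finset.Icc_self, Finset.sum_singleton]
    beta_reduce
    rw [if_neg one_ne_zero, if_pos rfl]
    simp

lemma sum_Icc_split (F : ℕ → ℝ) (ka kb : ℕ) :
    ∑ i ∈ Finset.Icc 1 (ka + kb), F i
      = ∑ i ∈ Finset.Icc 1 ka, F i + ∑ i ∈ Finset.Ioc ka (ka + kb), F i := by
  have hIcc : ∀ x : ℕ, Finset.Icc 1 x = Finset.Ioc 0 x := by
    intro x; ext t; simp only [Finset.mem_Icc, Finset.mem_Ioc]; omega
  rw [hIcc, hIcc]
  exact (Finset.sum_Ioc_consecutive F (Nat.zero_le ka) (Nat.le_add_right ka kb)).symm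

lemma Shape.add {a b : ℕ → ℝ} (ha : Shape a) (hb : Shape b) : Shape (fun n => a n + b n) := by
  obtain ⟨ka, pa, Ra, da, ha0, hai, haeq⟩ := ha
  obtain ⟨kb, pb, Rb, db, hb0, hbi, hbeq⟩ := hb
  refine ⟨ka + kb,
    (fun i => if i = 0 then (fun n => pa 0 n + pb 0 n) else if i ≤ ka then pa i else pb (i - ka)),
    (fun i => if i ≤ ka then Ra i else Rb (i - ka)),
    (fun i => if i ≤ ka then da i else db (i - ka)), ?_, ?_, ?_⟩
  · simpa using natPoly_add ha0 hb0
  · intro i hi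
    simp only [Finset.mem_Icc] at hi
    by_cases hika : i ≤ ka
    · simp only [if_neg (show ¬ i = 0 by omega), if_pos hika]
      exact hai i (Finset.mem_Icc.mpr ⟨hi.1, hika⟩)
    · simp only [if_neg (show ¬ i = 0 by omega), if_neg hika]
      exact hbi (i - ka) (Finset.mem_Icc.mpr ⟨by omega, by omega⟩)
  · intro n
    beta_reduce
    rw [haeq n, hbeq n, sum_Icc_split]
    have e1 : ∑ i ∈ Finset.Icc 1 ka,
        cauchy (if i = 0 then (fun n => pa 0 n + pb 0 n) else if i ≤ ka then pa i else pb (i - ka))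
          (substPow (if i ≤ ka then da i else db (i - ka))
            (if i ≤ ka then Ra i else Rb (i - ka))) n
        = ∑ i ∈ Finset.Icc 1 ka, cauchy (pa i) (substPow (da i) (Ra i)) n := by
      apply Finset.sum_congr rfl
      intro i hi
      simp only [Finset.mem_Icc] at hi
      rw [if_neg (show ¬ i = 0 by omega), if_pos hi.2, if_pos hi.2, if_pos hi.2]
    have e2 : ∑ i ∈ Finset.Ioc ka (ka + kb),
        cauchy (if i = 0 then (fun n => pa 0 n + pb 0 n) else if i ≤ ka then pa i else pb (i - ka))
          (substPow (if i ≤ ka then da i else db (i - ka))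
            (if i ≤ ka then Ra i else Rb (i - ka))) n
        = ∑ j ∈ Finset.Icc 1 kb, cauchy (pb j) (substPow (db j) (Rb j)) n := by
      apply Finset.sum_bij' (fun i _ => i - ka) (fun j _ => j + ka)
      · intro i hi
        simp only [Finset.mem_Ioc] at hi
        simp only [Finset.mem_Icc]
        omega
      · intro j hj
        simp only [Finset.mem_Icc] at hj
        simp only [Finset.mem_Ioc]
        omega
      · intro i hi; simp only [Finset.mem_Ioc] at hi; omega
      · intro j hj; simp only [Finset.mem_Icc] at hj; omega
      · intro i hi
        simp only [Finset.mem_Ioc] at hi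
        rw [if_neg (show ¬ i = 0 by omega), if_neg (show ¬ i ≤ ka by omega),
          if_neg (show ¬ i ≤ ka by omega), if_neg (show ¬ i ≤ ka by omega)]
    rw [e1, e2, if_pos rfl]
    beta_reduce
    ring

lemma Shape_zero : Shape (fun _ => (0 : ℝ)) := Shape_poly natPoly_zero

lemma Shape_sum {ι : Type*} (s : Finset ι) (F : ι → ℕ → ℝ) (h : ∀ i ∈ s, Shape (F i)) :
    Shape (fun n => ∑ i ∈ s, F i n) := by
  classical
  induction s using Finset.cons_induction with
  | empty => exact Shape_zero.congr (by simp)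
  | cons i s his ih =>
      exact Shape.congr (fun n => by rw [Finset.sum_cons])
        ((h i (Finset.mem_cons_self i s)).add (ih fun j hj => h j (Finset.mem_cons_of_mem hj)))

lemma Shape.nsmul {a : ℕ → ℝ} (ha : Shape a) (k : ℕ) : Shape (fun n => (k : ℝ) * a n) := by
  induction k with
  | zero => exact Shape_zero.congr (by intro n; simp)
  | succ k ih =>
      refine Shape.congr ?_ (ih.add ha)
      intro n
      push_cast
      ring

-- ### Shape closed under cauchy product

lemma cauchy_congr_left {a a' c : ℕ → ℝ} (h : ∀ m, a m = a' m) (n : ℕ) :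
    cauchy a c n = cauchy a' c n := by
  unfold cauchy
  exact Finset.sum_congr rfl fun j _ => by rw [h j]

lemma Shape_polyAtom {p q r : ℕ → ℝ} {d : ℕ} (hp : IsNatPoly p) (hq : IsNatPoly q)
    (hr : RTN1 r) (hd : 1 ≤ d) : Shape (cauchy p (cauchy q (substPow d r))) :=
  (Shape_atom (natPoly_cauchy hp hq) hr hd).congr (fun n => cauchy_assoc p q _ n)

lemma Shape_atomAtom {p q r s : ℕ → ℝ} {d e : ℕ} (hp : IsNatPoly p) (hq : IsNatPoly q)
    (hr : RTN1 r) (hs : RTN1 s) (hd : 1 ≤ d) (he : 1 ≤ e) :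
    Shape (cauchy (cauchy p (substPow d r)) (cauchy q (substPow e s))) := by
  have hde : 1 ≤ d * e := Nat.one_le_iff_ne_zero.mpr (by positivity)
  have hShape : Shape (fun n => ∑ α ∈ Finset.range e, ∑ β ∈ Finset.range d,
      cauchy (cauchy (cauchy p q) (delta (d * α + e * β)))
        (substPow (d * e) (cauchy (apSub e α r) (apSub d β s))) n) := by
    apply Shape_sum
    intro α _
    apply Shape_sum
    intro β _
    exact Shape_atom (natPoly_cauchy (natPoly_cauchy hp hq) (natPoly_delta _))
      (RTN1_cauchy (RTN1_apSub hr he α) (RTN1_apSub hs hd β)) hde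
  apply hShape.congr
  intro n
  symm
  calc cauchy (cauchy p (substPow d r)) (cauchy q (substPow e s)) n
      = cauchy (cauchy (substPow d r) (substPow e s)) (cauchy p q) n :=
        funeq_of_mk_eq (by simp only [mk_cauchy]; ring) n
    _ = cauchy (fun m => ∑ α ∈ Finset.range e, ∑ β ∈ Finset.range d,
          cauchy (delta (d * α + e * β))
            (substPow (d * e) (cauchy (apSub e α r) (apSub d β s))) m)
          (cauchy p q) n :=
        cauchy_congr_left (fun m => cauchy_substPow_expand d e hd he r s m) n
    _ = ∑ α ∈ Finset.range e, cauchy (fun m => ∑ β ∈ Finset.range d,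
          cauchy (delta (d * α + e * β))
            (substPow (d * e) (cauchy (apSub e α r) (apSub d β s))) m)
          (cauchy p q) n :=
        cauchy_sum_left (Finset.range e) _ (cauchy p q) n
    _ = ∑ α ∈ Finset.range e, ∑ β ∈ Finset.range d,
          cauchy (cauchy (delta (d * α + e * β))
            (substPow (d * e) (cauchy (apSub e α r) (apSub d β s))))
          (cauchy p q) n :=
        Finset.sum_congr rfl fun α _ => cauchy_sum_left (Finset.range d) _ (cauchy p q) n
    _ = ∑ α ∈ Finset.range e, ∑ β ∈ Finset.range d,
          cauchy (cauchy (cauchy p q) (delta (d * α + e * β)))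
            (substPow (d * e) (cauchy (apSub e α r) (apSub d β s))) n := by
        apply Finset.sum_congr rfl
        intro α _
        apply Finset.sum_congr rfl
        intro β _
        exact funeq_of_mk_eq (by simp only [mk_cauchy]; ring) n

lemma Shape.cauchyS {a b : ℕ → ℝ} (ha : Shape a) (hb : Shape b) : Shape (cauchy a b) := by
  obtain ⟨ka, pa, Ra, da, ha0, hai, haeq⟩ := ha
  obtain ⟨kb, pb, Rb, db, hb0, hbi, hbeq⟩ := hb
  have expand : ∀ (c : ℕ → ℝ) (n : ℕ), cauchy c b n
      = cauchy (pb 0) c n + ∑ j ∈ Finset.Icc 1 kb,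
          cauchy (cauchy (pb j) (substPow (db j) (Rb j))) c n := by
    intro c n
    calc cauchy c b n = cauchy b c n := cauchy_comm c b n
      _ = cauchy (fun m => pb 0 m + ∑ j ∈ Finset.Icc 1 kb,
            cauchy (pb j) (substPow (db j) (Rb j)) m) c n :=
          cauchy_congr_left hbeq n
      _ = _ := by rw [cauchy_add_left, cauchy_sum_left]
  have key : ∀ n, cauchy a b n
      = (cauchy (pb 0) (pa 0) n + ∑ j ∈ Finset.Icc 1 kb,
          cauchy (cauchy (pb j) (substPow (db j) (Rb j))) (pa 0) n)
        + ∑ i ∈ Finset.Icc 1 ka,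
            (cauchy (pb 0) (cauchy (pa i) (substPow (da i) (Ra i))) n
             + ∑ j ∈ Finset.Icc 1 kb,
                cauchy (cauchy (pb j) (substPow (db j) (Rb j)))
                  (cauchy (pa i) (substPow (da i) (Ra i))) n) := by
    intro n
    calc cauchy a b n
        = cauchy (fun m => pa 0 m + ∑ i ∈ Finset.Icc 1 ka,
            cauchy (pa i) (substPow (da i) (Ra i)) m) b n :=
          cauchy_congr_left haeq n
      _ = cauchy (pa 0) b n + ∑ i ∈ Finset.Icc 1 ka,
            cauchy (cauchy (pa i) (substPow (da i) (Ra i))) b n := by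
          rw [cauchy_add_left, cauchy_sum_left]
      _ = _ := by
          rw [expand (pa 0) n]
          congr 1
          exact Finset.sum_congr rfl fun i _ => expand _ n
  have S1 : Shape (cauchy (pb 0) (pa 0)) := Shape_poly (natPoly_cauchy hb0 ha0)
  have S2 : Shape (fun n => ∑ j ∈ Finset.Icc 1 kb,
      cauchy (cauchy (pb j) (substPow (db j) (Rb j))) (pa 0) n) := by
    apply Shape_sum
    intro j hj
    exact (Shape_polyAtom ha0 (hbi j hj).1 (hbi j hj).2.1 (hbi j hj).2.2).congr
      (fun n => cauchy_comm _ _ n)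
  have S3 : Shape (fun n => ∑ i ∈ Finset.Icc 1 ka,
      (cauchy (pb 0) (cauchy (pa i) (substPow (da i) (Ra i))) n
       + ∑ j ∈ Finset.Icc 1 kb,
          cauchy (cauchy (pb j) (substPow (db j) (Rb j)))
            (cauchy (pa i) (substPow (da i) (Ra i))) n)) := by
    apply Shape_sum
    intro i hi
    apply Shape.add
    · exact Shape_polyAtom hb0 (hai i hi).1 (hai i hi).2.1 (hai i hi).2.2
    · apply Shape_sum
      intro j hj
      exact Shape_atomAtom (hbi j hj).1 (hai i hi).1 (hbi j hj).2.1 (hai i hi).2.1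
        (hbi j hj).2.2 (hai i hi).2.2
  exact ((S1.add S2).add S3).congr (fun n => (key n).symm)

-- ### nonvanishing of cauchy products

lemma cauchy_ne_zero {P Q : ℕ → ℝ} (hP0 : P ≠ 0) (hQ0 : Q ≠ 0) : cauchy P Q ≠ 0 := by
  classical
  have hPex : ∃ n, P n ≠ 0 := by
    by_contra h
    push_neg at h
    exact hP0 (funext fun n => h n)
  have hQex : ∃ n, Q n ≠ 0 := by
    by_contra h
    push_neg at h
    exact hQ0 (funext fun n => h n)
  set n0 := Nat.find hPex with hn0
  set m0 := Nat.find hQex with hm0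
  have hval : cauchy P Q (n0 + m0) = P n0 * Q m0 := by
    unfold cauchy
    rw [Finset.sum_eq_single n0]
    · rw [show n0 + m0 - n0 = m0 by omega]
    · intro j hj hjne
      simp only [Finset.mem_range] at hj
      rcases lt_or_gt_of_ne hjne with h | h
      · rw [not_not.mp (Nat.find_min hPex h), zero_mul]
      · rw [not_not.mp (Nat.find_min hQex (show n0 + m0 - j < m0 by omega)), mul_zero]
    · intro h
      exact absurd (Finset.mem_range.mpr (by omega)) h
  intro hzero
  have : cauchy P Q (n0 + m0) = 0 := by rw [hzero]; rfl
  rw [hval] at this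
  exact mul_ne_zero (Nat.find_spec hPex) (Nat.find_spec hQex) this


/-- `𝔖` contains `x` and `x/(1-x^m)` for `m ≥ 1`, and is closed under multiplication by
positive integers, addition, and Cauchy product. -/
theorem S_basic_and_closure :
    InS (fun n => if n = 1 then (1 : ℝ) else 0) ∧
    (∀ m : ℕ, 1 ≤ m → InS (fun n => if 1 ≤ n ∧ m ∣ (n - 1) then (1 : ℝ) else 0)) ∧
    (∀ P Q : ℕ → ℝ, InS P → InS Q → ∀ k : ℕ, 1 ≤ k →
      InS (fun n => (k : ℝ) * P n) ∧ InS (fun n => P n + Q n) ∧ InS (cauchy P Q)) := by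
  refine ⟨?_, ?_, ?_⟩
  · -- x ∈ 𝔖
    refine ⟨?_, by simp, (natPoly_delta 1).1, Shape_poly (natPoly_delta 1)⟩
    intro h
    have := congrFun h 1
    norm_num at this
  · -- x/(1-x^m) ∈ 𝔖
    intro m hm
    refine ⟨?_, by simp, ?_, ?_⟩
    · intro h
      have := congrFun h 1
      simp at this
    · intro n
      by_cases h : 1 ≤ n ∧ m ∣ (n - 1)
      · exact ⟨1, by show (if _ then _ else _) = _; rw [if_pos h]; norm_num⟩
      · exact ⟨0, by show (if _ then _ else _) = _; rw [if_neg h]; norm_num⟩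
    · refine ⟨1, fun i => if i = 0 then (fun _ => 0) else delta 1, fun _ => onesSeq,
        fun _ => m, by simpa using natPoly_zero, ?_, ?_⟩
      · intro i hi
        simp only [Finset.mem_Icc] at hi
        beta_reduce
        rw [if_neg (show ¬ i = 0 by omega)]
        exact ⟨natPoly_delta 1, RTN1_ones, hm⟩
      · intro n
        beta_reduce
        rw [Finset.Icc_self, Finset.sum_singleton]
        beta_reduce
        rw [if_neg one_ne_zero, if_pos rfl, cauchy_delta 1 _ n]
        unfold xPowMul substPow onesSeq
        rw [show ((fun _ => (0:ℝ)) n) + _ = _ from zero_add _]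
        by_cases h1 : 1 ≤ n
        · rw [if_pos h1]
          by_cases h2 : m ∣ n - 1
          · rw [if_pos ⟨h1, h2⟩, if_pos h2]
          · rw [if_neg (by tauto), if_neg h2]
        · rw [if_neg (by tauto), if_neg h1]
  · -- closures
    intro P Q hP hQ k hk
    obtain ⟨hPne, hP0, hPnat, hPsh⟩ := hP
    obtain ⟨hQne, hQ0, hQnat, hQsh⟩ := hQ
    have hPsh' : Shape P := hPsh
    have hQsh' : Shape Q := hQsh
    have hPex : ∃ n, P n ≠ 0 := by
      by_contra h
      push_neg at h
      exact hPne (funext fun n => h n)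
    obtain ⟨n1, hn1⟩ := hPex
    refine ⟨⟨?_, ?_, natSeries_nsmul hPnat k, Shape.nsmul hPsh' k⟩,
      ⟨?_, ?_, natSeries_add hPnat hQnat, hPsh'.add hQsh'⟩,
      ⟨cauchy_ne_zero hPne hQne, ?_, natSeries_cauchy hPnat hQnat, hPsh'.cauchyS hQsh'⟩⟩
    · intro h
      have := congrFun h n1
      simp only [Pi.zero_apply] at this
      exact hn1 (by
        rcases mul_eq_zero.mp this with h' | h'
        · exact absurd h' (Nat.cast_ne_zero.mpr (by omega))
        · exact h')
    · show (k : ℝ) * P 0 = 0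
      rw [hP0, mul_zero]
    · intro h
      have := congrFun h n1
      simp only [Pi.zero_apply] at this
      have hp : 0 < P n1 := lt_of_le_of_ne (natSeries_nonneg hPnat n1) (Ne.symm hn1)
      have hq : 0 ≤ Q n1 := natSeries_nonneg hQnat n1
      linarith
    · show P 0 + Q 0 = 0
      rw [hP0, hQ0, add_zero]
    · show cauchy P Q 0 = 0
      unfold cauchy
      rw [Finset.sum_range_one, hP0, zero_mul]
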